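/- For a hexagon (d=6) with n_m := v_m × v_{m+1} and normalized variables, |Λ_1 Λ_3 Λ_5| = |n_2 n_4 n_6|·(x_2x_4x_6 − x_1x_3x_5), where Λ_r = x_{r+1}n_{r+1} − x_r n_{r-1} (indices mod 6); moreover |n_2 n_4 n_6| = |n_6 n_2 n_4|, so the two surviving coefficients in the determinant expansion are equal. -/

import Mathlib

open Matrix MvPolynomial

noncomputable def det3 (a b c : Fin 3 → ℝ) : ℝ := (Matrix.of ![a, b, c]).det

/-- Variables `X 0, …, X 5` correspond to `x_1, …, x_6` (indices shifted down by one,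
cyclically in `Fin 6`). -/
theorem stmt17 (v n : Fin 6 → Fin 3 → ℝ)
    (hn : ∀ m, n m = crossProduct (v m) (v (m + 1)))
    (Λ : Fin 6 → Fin 3 → MvPolynomial (Fin 6) ℝ)
    (hΛ : ∀ (r : Fin 6) (c : Fin 3),
      Λ r c = X (r + 1) * C (n (r + 1) c) - X r * C (n (r - 1) c)) :
    (Matrix.of ![Λ 0, Λ 2, Λ 4]).det
        = C (det3 (n 1) (n 3) (n 5)) * (X 1 * X 3 * X 5 - X 0 * X 2 * X 4) ∧
      det3 (n 1) (n 3) (n 5) = det3 (n 5) (n 1) (n 3) := by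
  constructor
  · simp only [det3, Matrix.det_fin_three, Matrix.of_apply, Matrix.cons_val', Matrix.cons_val_zero,
      Matrix.cons_val_one, Matrix.head_cons, Matrix.empty_val', Matrix.cons_val_fin_one,
      Matrix.head_fin_const, Matrix.cons_val_two, Matrix.tail_cons, hΛ, map_add, _root_.map_mul, map_sub, show ((0:Fin 6) - 1) = 5 from rfl, show ((0:Fin 6) + 1) = 1 from rfl, show ((2:Fin 6) + 1) = 3 from rfl, show ((4:Fin 6) + 1) = 5 from rfl, show ((2:Fin 6) - 1) = 1 from rfl, show ((4:Fin 6) - 1) = 3 from rfl]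
    ring
  · simp [det3, Matrix.det_fin_three]; ring
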